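/- Let (Y,R,ν) be a probability-preserving system and (B_l) a sequence of measurable sets with ν(B_l) > 0. Suppose that for a.e. y ∈ Y, for all l ≥ L_y and n ≥ M_y M_l, |∑_{j=1}^n 1_{B_l}(R^j y) − nν(B_l)| ≤ C_{l,y}·n^{1−(1−δ)/(r+1)} for constants δ ∈ (0,1), M_y, M_l, C_{l,y}, L_y. Define N_l(y) = max(M_l, ⌈1/(2ν(B_l))⌉, min{n ≥ 1 : n^{−(1−δ)/(r+1)} ≤ ν(B_l)/(2C_{l,y})}). Then for such y and all s ≥ M_y, |(ν(B_l)/(sN_l(y)))·∑_{j=0}^{⌈sN_l(y)⌉−1} φ_{B_l}(R_{B_l}^j y) − 1| ≤ 3s^{−(1−δ)/(r+1)} + 2/s, where φ_{B_l} is the first return time to B_l and R_{B_l} the first return map. -/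

import Mathlib

open MeasureTheory

lemma stmt14_aux {Y : Type*} (R : Y → Y) (Bl : Set Y) (φ : Y → ℕ)
    (hφ : ∀ z, φ z = sInf {n : ℕ | 1 ≤ n ∧ R^[n] z ∈ Bl})
    (hne : ∀ z : Y, ∃ n : ℕ, 1 ≤ n ∧ R^[n] z ∈ Bl)
    (T : Y → Y) (hT : ∀ z, T z = R^[φ z] z) (y : Y) (m : ℕ) :
    (∑ j ∈ Finset.Icc 1 (∑ j ∈ Finset.range m, φ (T^[j] y)),
      Set.indicator Bl (fun _ => (1:ℝ)) (R^[j] y)) = m := by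
  have hmem : ∀ z, 1 ≤ φ z ∧ R^[φ z] z ∈ Bl := by
    intro z; rw [hφ]; exact Nat.sInf_mem (hne z)
  have hmin : ∀ z k, 1 ≤ k → k < φ z → R^[k] z ∉ Bl := by
    intro z k h1 h2
    have hk : k < sInf {n : ℕ | 1 ≤ n ∧ R^[n] z ∈ Bl} := by rw [← hφ]; exact h2
    intro h3
    exact Nat.notMem_of_lt_sInf hk ⟨h1, h3⟩
  set S : ℕ → ℕ := fun m => ∑ j ∈ Finset.range m, φ (T^[j] y) with hS
  have hiter : ∀ k, R^[S k] y = T^[k] y := by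
    intro k
    induction k with
    | zero => simp [hS]
    | succ k ih =>
      have : S (k+1) = φ (T^[k] y) + S k := by
        simp only [hS, Finset.sum_range_succ]; ring
      rw [this, Function.iterate_add_apply, ih, Function.iterate_succ_apply',
        hT (T^[k] y)]
  induction m with
  | zero => simp [hS]
  | succ m ih =>
    push_cast
    have hSle : S m ≤ S (m+1) := by
      simp only [hS, Finset.sum_range_succ]; omega
    have hmid : (∑ j ∈ Finset.Ioc (S m) (S (m+1)),
        Set.indicator Bl (fun _ => (1:ℝ)) (R^[j] y)) = 1 := by
      have hSlt : S m < S (m+1) := by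
        have := (hmem (T^[m] y)).1
        simp only [hS, Finset.sum_range_succ]; omega
      rw [Finset.sum_eq_single_of_mem (S (m+1))
        (Finset.mem_Ioc.2 ⟨hSlt, le_refl _⟩)]
      · have hin : R^[S (m+1)] y ∈ Bl := by
          rw [hiter]
          rw [Function.iterate_succ_apply', hT (T^[m] y)]
          exact (hmem (T^[m] y)).2
        simp [Set.indicator_of_mem hin]
      · intro j hj hjne
        rw [Finset.mem_Ioc] at hj
        have hSsucc : S (m+1) = φ (T^[m] y) + S m := by
          simp only [hS, Finset.sum_range_succ]; ring
        have hj1 : 1 ≤ j - S m := by omega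
        have hj2 : j - S m < φ (T^[m] y) := by omega
        have hnot : R^[j] y ∉ Bl := by
          have hje : j = (j - S m) + S m := by omega
          rw [hje, Function.iterate_add_apply, hiter]
          exact hmin (T^[m] y) _ hj1 hj2
        simp [Set.indicator_of_notMem hnot]
    calc (∑ j ∈ Finset.Icc 1 (S (m+1)), Set.indicator Bl (fun _ => (1:ℝ)) (R^[j] y))
        = (∑ j ∈ Finset.Ioc 0 (S m), Set.indicator Bl (fun _ => (1:ℝ)) (R^[j] y))
          + (∑ j ∈ Finset.Ioc (S m) (S (m+1)),
            Set.indicator Bl (fun _ => (1:ℝ)) (R^[j] y)) := by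
          rw [← Finset.Icc_add_one_left_eq_Ioc 0]
          exact (Finset.sum_Ioc_consecutive _ (Nat.zero_le _) hSle).symm
      _ = (m : ℝ) + 1 := by
          rw [hmid, ← Finset.Icc_add_one_left_eq_Ioc 0]
          rw [show Finset.Icc (0 + 1) (S m) = Finset.Icc 1 (S m) from rfl, ih]


set_option maxHeartbeats 1000000 in
/-- turning a quantitative counting estimate for visits to `B_l` into a
two-sided estimate for Birkhoff sums of the first return time to `B_l`. -/
theorem stmt_14 {Y : Type*} [MeasurableSpace Y] (R : Y → Y) (ν : Measure Y)
    [IsProbabilityMeasure ν] (hR : MeasurePreserving R ν ν)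
    (B : ℕ → Set Y) (hBmeas : ∀ l, MeasurableSet (B l)) (hBpos : ∀ l, 0 < ν (B l))
    (hrec : ∀ l : ℕ, ∀ y : Y, ∃ n : ℕ, 1 ≤ n ∧ R^[n] y ∈ B l)
    (δ r : ℝ) (hδ0 : 0 < δ) (hδ1 : δ < 1) (hr : 0 < r)
    (phiB : ℕ → Y → ℕ) (hphiB : ∀ l y, phiB l y = sInf {n : ℕ | 1 ≤ n ∧ R^[n] y ∈ B l})
    (RB : ℕ → Y → Y) (hRB : ∀ l y, RB l y = R^[phiB l y] y)
    (y : Y) (Ly My : ℕ) (hMy : 1 ≤ My) (Ml : ℕ → ℕ) (Cl : ℕ → ℝ) (hCl : ∀ l, 0 < Cl l)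
    (hcount : ∀ l, Ly ≤ l → ∀ n : ℕ, My * Ml l ≤ n →
      |(∑ j ∈ Finset.Icc 1 n, Set.indicator (B l) (fun _ => (1 : ℝ)) (R^[j] y))
          - (n : ℝ) * (ν (B l)).toReal| ≤ Cl l * (n : ℝ) ^ (1 - (1 - δ) / (r + 1)))
    (N : ℕ → ℕ)
    (hN : ∀ l, N l = max (Ml l) (max ⌈1 / (2 * (ν (B l)).toReal)⌉₊
      (sInf {n : ℕ | 1 ≤ n ∧
        (n : ℝ) ^ (-(1 - δ) / (r + 1)) ≤ (ν (B l)).toReal / (2 * Cl l)}))) :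
    ∀ l, Ly ≤ l → ∀ s : ℝ, (My : ℝ) ≤ s →
      |((ν (B l)).toReal / (s * (N l : ℝ))) *
          (∑ j ∈ Finset.range ⌈s * (N l : ℝ)⌉₊, (phiB l ((RB l)^[j] y) : ℝ)) - 1|
        ≤ 3 * s ^ (-(1 - δ) / (r + 1)) + 2 / s := by
  intro l hl s hs
  have hNl := hN l
  have hcountl := hcount l hl
  clear hN hcount
  simp only [neg_div] at hNl ⊢
  set νB := (ν (B l)).toReal with hνBdef
  have hν0 : 0 < νB := ENNReal.toReal_pos (hBpos l).ne' (measure_ne_top ν _)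
  have hν1 : νB ≤ 1 := by
    have h := prob_le_one (μ := ν) (s := B l)
    have h2 := ENNReal.toReal_mono (by simp) h
    simpa using h2
  have hγ0 : 0 < (1 - δ) / (r + 1) := div_pos (by linarith) (by linarith)
  have hγ1 : (1 - δ) / (r + 1) ≤ 1 := by
    rw [div_le_one (by linarith)]; linarith
  set γ := (1 - δ) / (r + 1) with hγdef
  set C := Cl l with hCdef
  have hC0 : 0 < C := hCl l
  -- the sInf set is nonempty
  have hEne : {n : ℕ | 1 ≤ n ∧ (n : ℝ) ^ (-γ) ≤ νB / (2 * C)}.Nonempty := by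
    have ha0 : (0:ℝ) < (2 * C / νB) ^ (1/γ) := Real.rpow_pos_of_pos (by positivity) _
    obtain ⟨n, hn⟩ := exists_nat_ge (max 1 ((2 * C / νB) ^ (1/γ)))
    refine ⟨n, ?_, ?_⟩
    · have h1 : (1:ℝ) ≤ (n:ℝ) := le_trans (le_max_left _ _) hn
      exact_mod_cast h1
    · have h1 : (2 * C / νB) ^ (1/γ) ≤ (n:ℝ) := le_trans (le_max_right _ _) hn
      have h2 : (n:ℝ) ^ (-γ) ≤ ((2 * C / νB) ^ (1/γ)) ^ (-γ) :=
        Real.rpow_le_rpow_of_nonpos ha0 h1 (by linarith)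
      have h3 : ((2 * C / νB) ^ (1/γ)) ^ (-γ) = νB / (2 * C) := by
        rw [← Real.rpow_mul (by positivity)]
        rw [show (1/γ) * (-γ) = -1 by field_simp]
        rw [Real.rpow_neg_one, inv_div]
      linarith
  set n0 := sInf {n : ℕ | 1 ≤ n ∧ (n : ℝ) ^ (-γ) ≤ νB / (2 * C)} with hn0def
  have hn0mem := Nat.sInf_mem hEne
  rw [← hn0def] at hn0mem
  obtain ⟨hn01, hn0le⟩ := hn0mem
  have hNn0 : n0 ≤ N l := by rw [hNl]; exact le_max_of_le_right (le_max_right _ _)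
  have hNMl : Ml l ≤ N l := by rw [hNl]; exact le_max_left _ _
  have hN1 : 1 ≤ N l := le_trans hn01 hNn0
  have hdecay : ∀ k : ℕ, n0 ≤ k → C * (k:ℝ) ^ (-γ) ≤ νB / 2 := by
    intro k hk
    have hk0 : (0:ℝ) < (n0:ℝ) := by exact_mod_cast hn01
    have h1 : (k:ℝ) ^ (-γ) ≤ (n0:ℝ) ^ (-γ) :=
      Real.rpow_le_rpow_of_nonpos hk0 (by exact_mod_cast hk) (by linarith)
    have h2 : C * (k:ℝ) ^ (-γ) ≤ C * (νB/(2*C)) :=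
      mul_le_mul_of_nonneg_left (le_trans h1 hn0le) hC0.le
    have h3 : C * (νB/(2*C)) = νB/2 := by field_simp
    linarith
  -- basic positivity facts
  have hs1 : (1:ℝ) ≤ s := le_trans (by exact_mod_cast hMy) hs
  have hs0 : (0:ℝ) < s := by linarith
  have hNR1 : (1:ℝ) ≤ (N l : ℝ) := by exact_mod_cast hN1
  have hD0 : (0:ℝ) < s * (N l : ℝ) := by nlinarith
  set m := ⌈s * (N l : ℝ)⌉₊ with hmdef
  have hmlb : s * (N l : ℝ) ≤ (m:ℝ) := Nat.le_ceil _
  have hmub : (m:ℝ) < s * (N l : ℝ) + 1 := Nat.ceil_lt_add_one hD0.le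
  have hsN1 : (1:ℝ) ≤ s * (N l:ℝ) := by nlinarith
  have hm2 : (m:ℝ) ≤ 2 * (s * (N l:ℝ)) := by nlinarith
  -- return time facts
  have hmem : ∀ z, 1 ≤ phiB l z ∧ R^[phiB l z] z ∈ B l := by
    intro z; rw [hphiB]; exact Nat.sInf_mem (hrec l z)
  set S : ℕ → ℕ := fun k => ∑ j ∈ Finset.range k, phiB l ((RB l)^[j] y) with hSdef
  have hsum : (∑ j ∈ Finset.Icc 1 (S m),
      Set.indicator (B l) (fun _ => (1:ℝ)) (R^[j] y)) = m :=
    stmt14_aux R (B l) (phiB l) (hphiB l) (hrec l) (RB l) (hRB l) y m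
  have hmS : m ≤ S m := by
    calc m = ∑ _j ∈ Finset.range m, 1 := by simp
    _ ≤ S m := Finset.sum_le_sum (fun j _ => (hmem _).1)
  have hSR : (m:ℝ) ≤ (S m : ℝ) := by exact_mod_cast hmS
  have hS0 : (0:ℝ) < (S m : ℝ) := by linarith
  -- apply the counting estimate at n = S m
  have hMMl : My * Ml l ≤ S m := by
    have h1 : ((My * Ml l : ℕ) : ℝ) ≤ (S m : ℝ) := by
      push_cast
      have hMlN : (Ml l : ℝ) ≤ (N l : ℝ) := by exact_mod_cast hNMl
      calc (My:ℝ) * (Ml l : ℝ) ≤ s * (N l : ℝ) :=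
            mul_le_mul hs hMlN (by positivity) hs0.le
      _ ≤ (m:ℝ) := hmlb
      _ ≤ (S m : ℝ) := hSR
    exact_mod_cast h1
  have hcnt := hcountl (S m) hMMl
  rw [hsum] at hcnt
  -- decay at S m and N l
  have hn0S : n0 ≤ S m := by
    have h1 : (N l : ℝ) ≤ (m:ℝ) := le_trans (by nlinarith) hmlb
    have h2 : N l ≤ m := by exact_mod_cast h1
    exact le_trans hNn0 (le_trans h2 hmS)
  have hkeyS : C * (S m:ℝ) ^ (-γ) ≤ νB/2 := hdecay _ hn0S
  have hkeyN : C * (N l:ℝ) ^ (-γ) ≤ νB/2 := hdecay _ hNn0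
  have hCup : C * (S m:ℝ) ^ (1-γ) ≤ (νB/2) * (S m:ℝ) := by
    rw [show (1:ℝ) - γ = -γ + 1 by ring, Real.rpow_add hS0, Real.rpow_one]
    calc C * ((S m:ℝ) ^ (-γ) * (S m:ℝ)) = (C * (S m:ℝ) ^ (-γ)) * (S m:ℝ) := by ring
    _ ≤ (νB/2) * (S m:ℝ) := mul_le_mul_of_nonneg_right hkeyS hS0.le
  have habs := abs_le.mp hcnt
  have hSub : νB * (S m:ℝ) ≤ 4 * (s * (N l:ℝ)) := by nlinarith [habs.1]
  have hSub' : (S m:ℝ) ≤ 4/νB * (s * (N l:ℝ)) := by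
    rw [div_mul_eq_mul_div, le_div_iff₀ hν0]
    nlinarith
  -- main estimate
  have h4ν : (0:ℝ) ≤ 4/νB := by positivity
  have hsneg : (0:ℝ) ≤ s ^ (-γ) := Real.rpow_nonneg hs0.le _
  have hNneg : (0:ℝ) ≤ (N l:ℝ) ^ (-γ) := Real.rpow_nonneg (by positivity) _
  have e1 : C * (S m:ℝ) ^ (1-γ) ≤ C * (4/νB * (s * (N l:ℝ))) ^ (1-γ) :=
    mul_le_mul_of_nonneg_left (Real.rpow_le_rpow hS0.le hSub' (by linarith)) hC0.le
  have e2 : C * (4/νB * (s * (N l:ℝ))) ^ (1-γ)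
      = ((4/νB) ^ (1-γ) * (C * (N l:ℝ) ^ (-γ))) * (s ^ (-γ) * (s * (N l:ℝ))) := by
    rw [Real.mul_rpow h4ν hD0.le]
    rw [show (1:ℝ) - γ = -γ + 1 by ring, Real.rpow_add hD0, Real.rpow_one,
      Real.mul_rpow hs0.le (by positivity : (0:ℝ) ≤ (N l:ℝ))]
    ring
  have e3 : (4/νB) ^ ((1:ℝ)-γ) ≤ 4/νB := by
    have h1 : (1:ℝ) ≤ 4/νB := by rw [le_div_iff₀ hν0]; linarith
    calc (4/νB) ^ ((1:ℝ)-γ) ≤ (4/νB) ^ (1:ℝ) :=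
          Real.rpow_le_rpow_of_exponent_le h1 (by linarith)
    _ = 4/νB := Real.rpow_one _
  have e4 : (4/νB) ^ ((1:ℝ)-γ) * (C * (N l:ℝ) ^ (-γ)) ≤ (4/νB) * (νB/2) :=
    mul_le_mul e3 hkeyN (mul_nonneg hC0.le hNneg) h4ν
  have e5 : (4/νB) * (νB/2) = 2 := by field_simp; ring
  have hmain : C * (S m:ℝ) ^ (1-γ) ≤ 2 * s ^ (-γ) * (s * (N l:ℝ)) := by
    calc C * (S m:ℝ) ^ (1-γ)
        ≤ ((4/νB) ^ ((1:ℝ)-γ) * (C * (N l:ℝ) ^ (-γ))) * (s ^ (-γ) * (s * (N l:ℝ))) := by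
          rw [← e2]; exact e1
    _ ≤ 2 * (s ^ (-γ) * (s * (N l:ℝ))) :=
          mul_le_mul_of_nonneg_right (by rw [← e5]; exact e4)
            (mul_nonneg hsneg hD0.le)
    _ = 2 * s ^ (-γ) * (s * (N l:ℝ)) := by ring
  -- assemble
  have hcastS : (∑ j ∈ Finset.range m, (phiB l ((RB l)^[j] y) : ℝ)) = (S m : ℝ) := by
    rw [hSdef]; push_cast; rfl
  rw [hcastS]
  have key1 : |νB / (s * (N l:ℝ)) * (S m:ℝ) - (m:ℝ)/(s * (N l:ℝ))| ≤ 2 * s ^ (-γ) := by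
    have heq : νB / (s * (N l:ℝ)) * (S m:ℝ) - (m:ℝ)/(s * (N l:ℝ))
        = ((m:ℝ) - (S m:ℝ) * νB) / (s * (N l:ℝ)) * (-1) := by
      field_simp; ring
    rw [heq, abs_mul, abs_neg, abs_one, mul_one, abs_div, abs_of_pos hD0,
      div_le_iff₀ hD0]
    calc |(m:ℝ) - (S m:ℝ) * νB| ≤ C * (S m:ℝ) ^ (1-γ) := hcnt
    _ ≤ 2 * s ^ (-γ) * (s * (N l:ℝ)) := hmain
  have key2 : |(m:ℝ)/(s * (N l:ℝ)) - 1| ≤ 1/s := by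
    have h0 : (0:ℝ) ≤ (m:ℝ)/(s * (N l:ℝ)) - 1 := by
      rw [sub_nonneg, le_div_iff₀ hD0]; linarith
    rw [abs_of_nonneg h0]
    rw [show (m:ℝ)/(s * (N l:ℝ)) - 1 = ((m:ℝ) - s * (N l:ℝ)) / (s * (N l:ℝ)) by
      field_simp]
    rw [div_le_div_iff₀ hD0 hs0]
    nlinarith
  have hfin : (0:ℝ) < 1/s := by positivity
  calc |νB / (s * (N l:ℝ)) * (S m:ℝ) - 1|
      ≤ |νB / (s * (N l:ℝ)) * (S m:ℝ) - (m:ℝ)/(s * (N l:ℝ))|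
        + |(m:ℝ)/(s * (N l:ℝ)) - 1| := abs_sub_le _ _ _
  _ ≤ 2 * s ^ (-γ) + 1/s := add_le_add key1 key2
  _ ≤ 3 * s ^ (-γ) + 2/s := by
      have h1 : 2 * s ^ (-γ) ≤ 3 * s ^ (-γ) := by linarith [hsneg]
      have h2 : 1/s ≤ 2/s := by
        apply div_le_div_of_nonneg_right (by norm_num) hs0.le
      exact add_le_add h1 h2
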